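/- For every α with |α| < 1 and every y ∈ ℝ, ∫_ℝ E(η - y)·e^{αη} dη = (artanh(α)/α)·e^{αy}. -/

import Mathlib

open MeasureTheory

/-- The normalized exponential integral kernel E(x) = (1/2)·∫_{|x|}^∞ e^{-t}/t dt. -/
noncomputable def Ek (x : ℝ) : ℝ := (1 / 2) * ∫ t in Set.Ioi |x|, Real.exp (-t) / t

/-- The inverse hyperbolic tangent artanh(a) = (1/2)·log((1+a)/(1-a)). -/
noncomputable def artanh (a : ℝ) : ℝ := (1 / 2) * Real.log ((1 + a) / (1 - a))

open Real hiding artanh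
open Set

lemma int_exp_mul {c : ℝ} (hc : c ≠ 0) (a b : ℝ) :
    ∫ x in a..b, Real.exp (c * x) = (Real.exp (c * b) - Real.exp (c * a)) / c := by
  rw [intervalIntegral.integral_comp_mul_left (fun u => Real.exp u) hc,
    integral_exp, smul_eq_mul]
  ring

lemma int_exp_neg_mul_Ioi {s : ℝ} (hs : 0 < s) :
    ∫ t in Ioi (0:ℝ), Real.exp (-(s * t)) = 1 / s := by
  have := integral_comp_mul_left_Ioi (fun u => Real.exp (-u)) 0 hs
  simp only [mul_zero, integral_exp_neg_Ioi, neg_zero, Real.exp_zero, smul_eq_mul,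
    mul_one] at this
  rw [this, one_div]

lemma exp_neg_mul_integrable {c : ℝ} (hc : 0 < c) :
    Integrable (fun t => Real.exp (-(c * t))) (volume.restrict (Ioi (0:ℝ))) := by
  have := exp_neg_integrableOn_Ioi 0 hc
  have h2 : IntegrableOn (fun t => Real.exp (-(c * t))) (Ioi 0) := by simpa [neg_mul] using this
  exact h2

lemma frullani_le {a b : ℝ} (ha : 0 < a) (hab : a ≤ b) :
    ∫ t in Ioi (0:ℝ), (Real.exp (-(a*t)) - Real.exp (-(b*t))) / t = Real.log (b / a) := by
  have hb : 0 < b := ha.trans_le hab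
  set μ := volume.restrict (Ioi (0:ℝ)) with hμ
  set ν := volume.restrict (Ioc a b) with hν
  have hmeas : AEStronglyMeasurable (fun p : ℝ × ℝ => Real.exp (-(p.2 * p.1))) (μ.prod ν) := by
    exact (Real.continuous_exp.comp ((continuous_snd.mul continuous_fst).neg)).aestronglyMeasurable
  have hint : Integrable (fun p : ℝ × ℝ => Real.exp (-(p.2 * p.1))) (μ.prod ν) := by
    have hg : Integrable (fun p : ℝ × ℝ => Real.exp (-(a * p.1)) * 1) (μ.prod ν) :=
      Integrable.mul_prod (exp_neg_mul_integrable ha) (integrable_const _)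
    refine hg.mono' hmeas ?_
    have hprod : μ.prod ν = (volume.prod volume).restrict (Ioi (0:ℝ) ×ˢ Ioc a b) := by
      rw [hμ, hν, Measure.prod_restrict]
    rw [hprod]
    filter_upwards [ae_restrict_mem (measurableSet_Ioi.prod measurableSet_Ioc)] with p hp
    obtain ⟨hp1, hp2⟩ := hp
    rw [Real.norm_eq_abs, abs_of_pos (Real.exp_pos _), mul_one]
    apply Real.exp_le_exp.2
    simp only [neg_le_neg_iff]
    exact mul_le_mul_of_nonneg_right hp2.1.le (le_of_lt hp1)
  have swap := integral_integral_swap (f := fun t s => Real.exp (-(s * t))) (μ := μ) (ν := ν) hint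
  have lhs_eq : (∫ t, (∫ s, Real.exp (-(s * t)) ∂ν) ∂μ)
      = ∫ t in Ioi (0:ℝ), (Real.exp (-(a*t)) - Real.exp (-(b*t))) / t := by
    apply setIntegral_congr_ae measurableSet_Ioi
    filter_upwards with t ht
    have hts : (t:ℝ) ≠ 0 := ne_of_gt ht
    have : (∫ s, Real.exp (-(s * t)) ∂ν) = ∫ s in a..b, Real.exp ((-t) * s) := by
      rw [hν, intervalIntegral.integral_of_le hab]
      congr 1; ext s; ring_nf
    rw [this, int_exp_mul (neg_ne_zero.2 hts), div_neg, ← neg_div]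
    ring_nf
  have rhs_eq : (∫ s, (∫ t, Real.exp (-(s * t)) ∂μ) ∂ν) = Real.log (b / a) := by
    have h1 : (∫ s, (∫ t, Real.exp (-(s * t)) ∂μ) ∂ν) = ∫ s in Ioc a b, 1 / s := by
      apply setIntegral_congr_ae measurableSet_Ioc
      filter_upwards with s hs
      exact int_exp_neg_mul_Ioi (ha.trans hs.1)
    rw [h1, ← intervalIntegral.integral_of_le hab, integral_one_div]
    intro h
    exact absurd h (by simp [Set.uIcc_of_le hab, Set.mem_Icc]; intro h'; linarith)
  rw [← lhs_eq, swap, rhs_eq]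

lemma frullani {a b : ℝ} (ha : 0 < a) (hb : 0 < b) :
    ∫ t in Ioi (0:ℝ), (Real.exp (-(a*t)) - Real.exp (-(b*t))) / t = Real.log (b / a) := by
  rcases le_total a b with h | h
  · exact frullani_le ha h
  · have h2 := frullani_le hb h
    have neg : ∀ t : ℝ, (Real.exp (-(a*t)) - Real.exp (-(b*t))) / t
        = -((Real.exp (-(b*t)) - Real.exp (-(a*t))) / t) := fun t => by ring
    simp_rw [neg]
    rw [integral_neg, h2, ← Real.log_inv, inv_div]

lemma J_eq (α : ℝ) (hα : |α| < 1) :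
    (∫ x : ℝ, Ek x * Real.exp (α * x)) =
    ∫ t in Ioi (0:ℝ), (Real.exp (-t) / t) * ((1/2) * ∫ x in (-t)..t, Real.exp (α * x)) := by
  set μ := volume.restrict (Ioi (0:ℝ)) with hμ
  set f : ℝ → ℝ → ℝ := fun t x =>
    (Real.exp (-t) / t) * ((1/2) * (Ioo (-t) t).indicator (fun x => Real.exp (α * x)) x) with hf
  have hS : MeasurableSet {p : ℝ × ℝ | p.2 ∈ Set.Ioo (-p.1) p.1} :=
    (measurableSet_lt measurable_fst.neg measurable_snd).inter
      (measurableSet_lt measurable_snd measurable_fst)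
  have hmeas : AEStronglyMeasurable (Function.uncurry f) (μ.prod volume) := by
    have : Function.uncurry f = fun p : ℝ × ℝ => (Real.exp (-p.1) / p.1) *
        ((1/2) * ({p : ℝ × ℝ | p.2 ∈ Set.Ioo (-p.1) p.1}).indicator
          (fun q => Real.exp (α * q.2)) p) := by
      funext p
      simp only [Function.uncurry, hf, Set.indicator_apply, Set.mem_setOf_eq]
    rw [this]
    refine Measurable.aestronglyMeasurable ?_
    exact ((measurable_exp.comp measurable_fst.neg).div measurable_fst).mul
      (measurable_const.mul ((measurable_exp.comp (measurable_snd.const_mul α)).indicator hS))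
  have h1 : ∀ᵐ t ∂μ, Integrable (f t) volume := by
    filter_upwards [ae_restrict_mem measurableSet_Ioi] with t ht
    refine Integrable.const_mul (Integrable.const_mul ?_ _) _
    rw [integrable_indicator_iff measurableSet_Ioo]
    exact ((Real.continuous_exp.comp (continuous_const.mul continuous_id)).integrableOn_Icc).mono_set
      Ioo_subset_Icc_self
  have hbound : ∀ᵐ t ∂μ, ‖∫ x : ℝ, ‖f t x‖‖ ≤ Real.exp (-((1 - |α|) * t)) := by
    filter_upwards [ae_restrict_mem measurableSet_Ioi] with t ht
    have ht0 : (0:ℝ) < t := ht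
    have hnn : ∀ x, 0 ≤ f t x := by
      intro x
      apply mul_nonneg (by positivity)
      apply mul_nonneg (by norm_num)
      exact Set.indicator_nonneg (fun x _ => (Real.exp_pos _).le) x
    have heq : (fun x : ℝ => ‖f t x‖) = f t := by
      funext x; rw [Real.norm_eq_abs, abs_of_nonneg (hnn x)]
    rw [heq, Real.norm_eq_abs, abs_of_nonneg (integral_nonneg hnn)]
    have hint1 : IntegrableOn (fun x => Real.exp (α * x)) (Ioo (-t) t) volume :=
      ((Real.continuous_exp.comp (continuous_const.mul continuous_id)).integrableOn_Icc).mono_set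
        Ioo_subset_Icc_self
    have step1 : (∫ x : ℝ, f t x) =
        (Real.exp (-t) / t) * ((1/2) * ∫ x in Ioo (-t) t, Real.exp (α * x)) := by
      rw [hf]
      simp only
      rw [integral_const_mul, integral_const_mul, integral_indicator measurableSet_Ioo]
    have step2 : (∫ x in Ioo (-t) t, Real.exp (α * x)) ≤ 2 * t * Real.exp (|α| * t) := by
      have h2 : (∫ x in Ioo (-t) t, Real.exp (α * x)) ≤
          ∫ _ in Ioo (-t) t, Real.exp (|α| * t) := by
        apply setIntegral_mono_on hint1 (integrableOn_const (by
          rw [Real.volume_Ioo]; exact ENNReal.ofReal_ne_top)) measurableSet_Ioo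
        intro x hx
        apply Real.exp_le_exp.2
        calc α * x ≤ |α * x| := le_abs_self _
        _ = |α| * |x| := abs_mul _ _
        _ ≤ |α| * t := by
            apply mul_le_mul_of_nonneg_left _ (abs_nonneg α)
            rw [abs_le]; exact ⟨hx.1.le, hx.2.le⟩
      rw [setIntegral_const, Real.volume_real_Ioo, smul_eq_mul] at h2
      calc (∫ x in Ioo (-t) t, Real.exp (α * x)) ≤ _ := h2
        _ = 2 * t * Real.exp (|α| * t) := by
            rw [max_eq_left (by linarith)]; ring
    calc (∫ x : ℝ, f t x) = (Real.exp (-t) / t) * ((1/2) * ∫ x in Ioo (-t) t, Real.exp (α * x)) :=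
          step1
      _ ≤ (Real.exp (-t) / t) * ((1/2) * (2 * t * Real.exp (|α| * t))) := by
          apply mul_le_mul_of_nonneg_left _ (by positivity)
          apply mul_le_mul_of_nonneg_left step2 (by norm_num)
      _ = Real.exp (-((1 - |α|) * t)) := by
          rw [show -((1 - |α|) * t) = -t + |α| * t by ring, Real.exp_add]
          field_simp
  have c_int : Integrable (fun t => ∫ x : ℝ, ‖f t x‖) μ := by
    refine Integrable.mono' (exp_neg_mul_integrable (c := 1 - |α|) (by linarith)) ?_ hbound
    exact hmeas.norm.integral_prod_right'
  have hintf : Integrable (Function.uncurry f) (μ.prod volume) :=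
    (integrable_prod_iff hmeas).2 ⟨h1, c_int⟩
  have swap := integral_integral_swap (f := f) (μ := μ) (ν := volume) hintf
  have lhs : (∫ x : ℝ, Ek x * Real.exp (α * x)) = ∫ x : ℝ, ∫ t, f t x ∂μ := by
    apply integral_congr_ae
    have h0 : ∀ᵐ x : ℝ, x ≠ 0 := by
      rw [ae_iff]
      simp only [ne_eq, not_not, Set.setOf_eq_eq_singleton]
      exact measure_singleton 0
    filter_upwards [h0] with x hx
    have habs : (0:ℝ) < |x| := abs_pos.2 hx
    have hind : ∀ t : ℝ, f t x =
        (Ioi |x|).indicator (fun t => (Real.exp (-t) / t) * ((1/2) * Real.exp (α * x))) t := by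
      intro t
      simp only [hf, Set.indicator_apply, Set.mem_Ioo, Set.mem_Ioi, ← abs_lt]
      by_cases h : |x| < t <;> simp [h]
    simp_rw [hind]
    rw [hμ, integral_indicator measurableSet_Ioi, Measure.restrict_restrict measurableSet_Ioi,
      Set.inter_eq_left.2 (Ioi_subset_Ioi (abs_nonneg x)), integral_mul_const]
    rw [Ek]
    ring
  rw [lhs, ← swap]
  apply setIntegral_congr_ae measurableSet_Ioi
  filter_upwards with t ht
  have hle : -t ≤ t := by linarith [ht.out]
  rw [hf]
  simp only
  rw [integral_const_mul, integral_const_mul, integral_indicator measurableSet_Ioo,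
    intervalIntegral.integral_of_le hle, integral_Ioc_eq_integral_Ioo]

lemma key_val (α : ℝ) (hα : |α| < 1) :
    (∫ x : ℝ, Ek x * Real.exp (α * x)) = if α = 0 then 1 else artanh α / α := by
  by_cases h0 : α = 0
  · subst h0
    rw [if_pos rfl, J_eq 0 (by simp)]
    have hcong : ∀ᵐ t ∂(volume.restrict (Ioi (0:ℝ))),
        (Real.exp (-t) / t) * ((1/2) * ∫ x in (-t)..t, Real.exp (0 * x)) = Real.exp (-t) := by
      filter_upwards [ae_restrict_mem measurableSet_Ioi] with t ht
      have ht0 : (0:ℝ) < t := ht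
      simp only [zero_mul, Real.exp_zero, intervalIntegral.integral_const, smul_eq_mul, mul_one,
        sub_neg_eq_add]
      field_simp
      norm_num
    rw [integral_congr_ae hcong, integral_exp_neg_Ioi_zero]
  · rw [if_neg h0]
    obtain ⟨hl, hr⟩ := abs_lt.1 hα
    have h1a : 0 < 1 - α := by linarith
    have h1b : 0 < 1 + α := by linarith
    rw [J_eq α hα]
    have hcong : ∀ᵐ t ∂(volume.restrict (Ioi (0:ℝ))),
        (Real.exp (-t) / t) * ((1/2) * ∫ x in (-t)..t, Real.exp (α * x)) =
        (1/(2*α)) * ((Real.exp (-((1-α)*t)) - Real.exp (-((1+α)*t))) / t) := by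
      filter_upwards [ae_restrict_mem measurableSet_Ioi] with t ht
      have ht0 : (0:ℝ) < t := ht
      rw [int_exp_mul h0, show α * -t = -(α*t) by ring,
        show -((1-α)*t) = -t + α*t by ring, show -((1+α)*t) = -t + -(α*t) by ring,
        Real.exp_add, Real.exp_add]
      field_simp
    rw [integral_congr_ae hcong, integral_const_mul, frullani h1a h1b, artanh]
    ring

/-- for |α| < 1 and y ∈ ℝ, ∫_ℝ E(η-y)e^{αη} dη = (artanh α / α)·e^{αy}. -/
theorem stmt4 : ∀ α : ℝ, |α| < 1 → ∀ y : ℝ,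
    (∫ η : ℝ, Ek (η - y) * Real.exp (α * η)) =
      (if α = 0 then 1 else artanh α / α) * Real.exp (α * y) := by
  intro α hα y
  rw [← integral_add_right_eq_self (μ := volume) (fun η => Ek (η - y) * Real.exp (α * η)) y]
  have hpt : ∀ x : ℝ, Ek (x + y - y) * Real.exp (α * (x + y)) =
      (Ek x * Real.exp (α * x)) * Real.exp (α * y) := by
    intro x
    rw [add_sub_cancel_right, mul_add, Real.exp_add]
    ring
  simp only [hpt]
  rw [integral_mul_const, key_val α hα]
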